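/- Let n ≥ 1, let X be a topological space, and let φ, ψ : S^{n−1} → X be topological embeddings with the same image, φ(S^{n−1}) = ψ(S^{n−1}). Then the adjunction spaces X ∪_φ Dⁿ and X ∪_ψ Dⁿ are homeomorphic, via a homeomorphism that restricts to the identity on X. -/

import Mathlib

/-!
STATEMENT 5: Let n ≥ 1, X a topological space, and φ, ψ : S^{n-1} → X topological
embeddings with φ(S^{n-1}) = ψ(S^{n-1}).  Then the adjunction spaces X ∪_φ Dⁿ and
X ∪_ψ Dⁿ are homeomorphic via a homeomorphism restricting to the identity on X.
-/

open Metric Set Topology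

/-- The identifications defining the adjunction space `X ∪_φ Dⁿ`:  a point `s` of the
boundary sphere `S^{n-1} ⊆ Dⁿ` is identified with `φ s ∈ X`. -/
def adjunctionRel {n : ℕ} {X : Type*}
    (φ : sphere (0 : EuclideanSpace ℝ (Fin n)) 1 → X) :
    X ⊕ closedBall (0 : EuclideanSpace ℝ (Fin n)) 1 →
      X ⊕ closedBall (0 : EuclideanSpace ℝ (Fin n)) 1 → Prop :=
  fun p q => ∃ s : sphere (0 : EuclideanSpace ℝ (Fin n)) 1,
    p = Sum.inr ⟨(s : EuclideanSpace ℝ (Fin n)), sphere_subset_closedBall s.2⟩ ∧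
    q = Sum.inl (φ s)

/-- The adjunction space `X ∪_φ Dⁿ`, i.e. the quotient of `X ⊔ Dⁿ` by the
identifications `s ~ φ s` for `s ∈ S^{n-1}`, with the quotient topology. -/
def AdjunctionSpace {n : ℕ} {X : Type*} [TopologicalSpace X]
    (φ : sphere (0 : EuclideanSpace ℝ (Fin n)) 1 → X) : Type _ :=
  Quot (adjunctionRel φ)

noncomputable instance {n : ℕ} {X : Type*} [TopologicalSpace X]
    (φ : sphere (0 : EuclideanSpace ℝ (Fin n)) 1 → X) :
    TopologicalSpace (AdjunctionSpace φ) :=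
  instTopologicalSpaceQuot

/-! ### Radial extension of a sphere self-homeomorphism to the closed ball -/

section Radial

variable {E : Type*} [NormedAddCommGroup E] [NormedSpace ℝ E]

theorem mem_sphere_normalize {x : E} (hx : x ≠ 0) : ‖x‖⁻¹ • x ∈ sphere (0 : E) 1 := by
  simp [mem_sphere_zero_iff_norm, norm_smul,
    inv_mul_cancel₀ (norm_ne_zero_iff.mpr hx)]

open Classical in
/-- The unit direction of `x`, with a default value `p` at `x = 0`. -/
noncomputable def unitDir (p : sphere (0 : E) 1) (x : E) : sphere (0 : E) 1 :=
  if h : x = 0 then p else ⟨‖x‖⁻¹ • x, mem_sphere_normalize h⟩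

theorem unitDir_of_ne (p : sphere (0 : E) 1) {x : E} (hx : x ≠ 0) :
    unitDir p x = ⟨‖x‖⁻¹ • x, mem_sphere_normalize hx⟩ := by
  rw [unitDir, dif_neg hx]

/-- Radial extension of a self-map `e` of the unit sphere to the whole space. -/
noncomputable def radialExt (p : sphere (0 : E) 1)
    (e : sphere (0 : E) 1 → sphere (0 : E) 1) (x : E) : E :=
  ‖x‖ • ((e (unitDir p x)) : E)

theorem norm_radialExt (p : sphere (0 : E) 1)
    (e : sphere (0 : E) 1 → sphere (0 : E) 1) (x : E) :
    ‖radialExt p e x‖ = ‖x‖ := by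
  have h : ‖((e (unitDir p x)) : E)‖ = 1 := mem_sphere_zero_iff_norm.mp (e (unitDir p x)).2
  simp [radialExt, norm_smul, h]

theorem radialExt_zero (p : sphere (0 : E) 1)
    (e : sphere (0 : E) 1 → sphere (0 : E) 1) : radialExt p e 0 = 0 := by
  simp [radialExt]

theorem radialExt_sphere (p : sphere (0 : E) 1)
    (e : sphere (0 : E) 1 → sphere (0 : E) 1) (s : sphere (0 : E) 1) :
    radialExt p e (s : E) = (e s : E) := by
  have hs : ‖(s : E)‖ = 1 := mem_sphere_zero_iff_norm.mp s.2
  have hs0 : (s : E) ≠ 0 := by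
    intro h; rw [h] at hs; simp at hs
  have hu : unitDir p (s : E) = s := by
    rw [unitDir_of_ne p hs0]
    refine Subtype.ext ?_
    show ‖(s : E)‖⁻¹ • (s : E) = (s : E)
    rw [hs, inv_one, one_smul]
  rw [radialExt, hu, hs, one_smul]

theorem radialExt_inverse (p : sphere (0 : E) 1)
    (e e' : sphere (0 : E) 1 → sphere (0 : E) 1)
    (h : ∀ s, e' (e s) = s) (x : E) :
    radialExt p e' (radialExt p e x) = x := by
  rcases eq_or_ne x 0 with rfl | hx
  · rw [radialExt_zero, radialExt_zero]
  · have hnx : ‖x‖ ≠ 0 := norm_ne_zero_iff.mpr hx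
    set y := radialExt p e x with hy
    have hny : ‖y‖ = ‖x‖ := norm_radialExt p e x
    have hy0 : y ≠ 0 := by
      intro h0
      rw [h0, norm_zero] at hny
      exact hnx hny.symm
    have huy : unitDir p y = e (unitDir p x) := by
      rw [unitDir_of_ne p hy0]
      refine Subtype.ext ?_
      show ‖y‖⁻¹ • y = ((e (unitDir p x)) : E)
      rw [hny, hy, radialExt, smul_smul, inv_mul_cancel₀ hnx, one_smul]
    have hux : ((unitDir p x) : E) = ‖x‖⁻¹ • x := by rw [unitDir_of_ne p hx]
    rw [radialExt, huy, h, hny, hux, smul_smul, mul_inv_cancel₀ hnx, one_smul]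

theorem continuous_unitDir_restrict (p : sphere (0 : E) 1) :
    Continuous (fun y : {y : E // y ≠ 0} => unitDir p y.1) := by
  have hre : (fun y : {y : E // y ≠ 0} => unitDir p y.1) =
      fun y : {y : E // y ≠ 0} => ⟨‖y.1‖⁻¹ • y.1, mem_sphere_normalize y.2⟩ :=
    funext fun y => unitDir_of_ne p y.2
  rw [hre]
  refine Continuous.subtype_mk ?_ _
  exact ((continuous_norm.comp continuous_subtype_val).inv₀
    (fun y : {y : E // y ≠ 0} => norm_ne_zero_iff.mpr y.2)).smul continuous_subtype_val

theorem continuous_radialExt (p : sphere (0 : E) 1)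
    {e : sphere (0 : E) 1 → sphere (0 : E) 1} (he : Continuous e) :
    Continuous (radialExt p e) := by
  rw [continuous_iff_continuousAt]
  intro x
  rcases eq_or_ne x 0 with rfl | hx
  · rw [ContinuousAt, radialExt_zero, tendsto_zero_iff_norm_tendsto_zero]
    simp only [norm_radialExt]
    simpa using (continuous_norm.tendsto (0 : E))
  · have hu : ContinuousAt (unitDir p) x := by
      have hcr : ContinuousOn (unitDir p) {y : E | y ≠ 0} := by
        rw [continuousOn_iff_continuous_restrict]
        exact continuous_unitDir_restrict p
      exact hcr.continuousAt (isOpen_compl_singleton.mem_nhds hx)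
    exact continuous_norm.continuousAt.smul
      (continuous_subtype_val.continuousAt.comp (he.continuousAt.comp hu))

theorem radialExt_mem_closedBall (p : sphere (0 : E) 1)
    (e : sphere (0 : E) 1 → sphere (0 : E) 1) (x : closedBall (0 : E) 1) :
    radialExt p e x.1 ∈ closedBall (0 : E) 1 := by
  rw [mem_closedBall_zero_iff, norm_radialExt]
  exact mem_closedBall_zero_iff.mp x.2

/-- The radial extension of a homeomorphism of the unit sphere to a homeomorphism of the
closed unit ball. -/
noncomputable def radialHomeo (p : sphere (0 : E) 1)
    (e : sphere (0 : E) 1 ≃ₜ sphere (0 : E) 1) :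
    closedBall (0 : E) 1 ≃ₜ closedBall (0 : E) 1 :=
  { toFun := fun x => ⟨radialExt p e x.1, radialExt_mem_closedBall p e x⟩
    invFun := fun x => ⟨radialExt p e.symm x.1, radialExt_mem_closedBall p e.symm x⟩
    left_inv := fun x =>
      Subtype.ext (radialExt_inverse p e e.symm (fun s => e.symm_apply_apply s) x.1)
    right_inv := fun x =>
      Subtype.ext (radialExt_inverse p e.symm e (fun s => e.apply_symm_apply s) x.1)
    continuous_toFun := Continuous.subtype_mk
      ((continuous_radialExt p e.continuous).comp continuous_subtype_val)
      (fun x => radialExt_mem_closedBall p e x)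
    continuous_invFun := Continuous.subtype_mk
      ((continuous_radialExt p e.symm.continuous).comp continuous_subtype_val)
      (fun x => radialExt_mem_closedBall p e.symm x) }

end Radial

theorem adjunction_space_independent_of_attaching_map
    {n : ℕ} (hn : 1 ≤ n) {X : Type*} [TopologicalSpace X]
    (φ ψ : sphere (0 : EuclideanSpace ℝ (Fin n)) 1 → X)
    (hφ : IsEmbedding φ) (hψ : IsEmbedding ψ)
    (himg : range φ = range ψ) :
    ∃ H : AdjunctionSpace φ ≃ₜ AdjunctionSpace ψ,
      ∀ x : X, H (Quot.mk _ (Sum.inl x)) = Quot.mk _ (Sum.inl x) := by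
  set E := EuclideanSpace ℝ (Fin n) with hE
  -- a base point on the sphere
  have hp : EuclideanSpace.single (⟨0, hn⟩ : Fin n) (1 : ℝ) ∈ sphere (0 : E) 1 := by
    rw [mem_sphere_zero_iff_norm, EuclideanSpace.norm_single]; norm_num
  set p : sphere (0 : E) 1 := ⟨_, hp⟩ with hpdef
  -- the homeomorphism of spheres induced by the two embeddings
  let e : sphere (0 : E) 1 ≃ₜ sphere (0 : E) 1 :=
    (IsEmbedding.toHomeomorph hφ).trans
      ((Homeomorph.setCongr himg).trans (IsEmbedding.toHomeomorph hψ).symm)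
  have he : ∀ s, ψ (e s) = φ s := by
    intro s
    have h1 : (IsEmbedding.toHomeomorph hψ) (e s)
        = (Homeomorph.setCongr himg) ((IsEmbedding.toHomeomorph hφ) s) := by
      simp only [e, Homeomorph.trans_apply]
      exact (IsEmbedding.toHomeomorph hψ).apply_symm_apply _
    have h2 := congrArg Subtype.val h1
    simpa [IsEmbedding.toHomeomorph, Homeomorph.setCongr] using h2
  have he' : ∀ s, φ (e.symm s) = ψ s := by
    intro s
    have h := he (e.symm s)
    rw [e.apply_symm_apply] at h
    exact h.symm
  -- the radial homeomorphism of the closed ball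
  let F : closedBall (0 : E) 1 ≃ₜ closedBall (0 : E) 1 := radialHomeo p e
  have hFs : ∀ s : sphere (0 : E) 1,
      F ⟨(s : E), sphere_subset_closedBall s.2⟩ =
        ⟨((e s) : E), sphere_subset_closedBall (e s).2⟩ := by
    intro s
    refine Subtype.ext ?_
    show radialExt p e (s : E) = ((e s) : E)
    exact radialExt_sphere p e s
  have hFs' : ∀ s : sphere (0 : E) 1,
      F.symm ⟨(s : E), sphere_subset_closedBall s.2⟩ =
        ⟨((e.symm s) : E), sphere_subset_closedBall (e.symm s).2⟩ := by
    intro s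
    refine Subtype.ext ?_
    show radialExt p e.symm (s : E) = ((e.symm s) : E)
    exact radialExt_sphere p e.symm s
  -- forward and backward maps
  let fwd : X ⊕ closedBall (0 : E) 1 → AdjunctionSpace ψ :=
    Sum.elim (fun x => Quot.mk _ (Sum.inl x)) (fun d => Quot.mk _ (Sum.inr (F d)))
  let bwd : X ⊕ closedBall (0 : E) 1 → AdjunctionSpace φ :=
    Sum.elim (fun x => Quot.mk _ (Sum.inl x)) (fun d => Quot.mk _ (Sum.inr (F.symm d)))
  have hfwd : ∀ a b, adjunctionRel φ a b → fwd a = fwd b := by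
    rintro a b ⟨s, rfl, rfl⟩
    show Quot.mk _ (Sum.inr (F ⟨(s : E), _⟩)) = Quot.mk _ (Sum.inl (φ s))
    rw [hFs s]
    exact Quot.sound ⟨e s, rfl, by rw [he s]⟩
  have hbwd : ∀ a b, adjunctionRel ψ a b → bwd a = bwd b := by
    rintro a b ⟨s, rfl, rfl⟩
    show Quot.mk _ (Sum.inr (F.symm ⟨(s : E), _⟩)) = Quot.mk _ (Sum.inl (ψ s))
    rw [hFs' s]
    exact Quot.sound ⟨e.symm s, rfl, by rw [he' s]⟩
  refine ⟨⟨⟨Quot.lift fwd hfwd, Quot.lift bwd hbwd, ?_, ?_⟩, ?_, ?_⟩, fun x => rfl⟩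
  · intro q
    induction q using Quot.ind with
    | _ a =>
      cases a with
      | inl x => rfl
      | inr d =>
        show Quot.mk _ (Sum.inr (F.symm (F d))) = Quot.mk _ (Sum.inr d)
        rw [F.symm_apply_apply]
  · intro q
    induction q using Quot.ind with
    | _ a =>
      cases a with
      | inl x => rfl
      | inr d =>
        show Quot.mk _ (Sum.inr (F (F.symm d))) = Quot.mk _ (Sum.inr d)
        rw [F.apply_symm_apply]
  · exact continuous_quot_lift hfwd
      (Continuous.sumElim (continuous_quot_mk.comp continuous_inl)
        (continuous_quot_mk.comp (continuous_inr.comp F.continuous)))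
  · exact continuous_quot_lift hbwd
      (Continuous.sumElim (continuous_quot_mk.comp continuous_inl)
        (continuous_quot_mk.comp (continuous_inr.comp F.symm.continuous)))
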